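/- Let N = q^k·n^2 be an odd perfect number given in Eulerian form. Then 5/4 < √(8/5) < I(n) < 2, where I(x) = σ(x)/x is the abundancy index. -/

import Mathlib

open Finset ArithmeticFunction
open scoped ArithmeticFunction.sigma

/-- The abundancy index `I(x) = σ(x)/x`, as a real number. -/
noncomputable def abundancy (x : ℕ) : ℝ := (ArithmeticFunction.sigma 1 x : ℝ) / x

lemma aux_div_gcd_dvd {f n : ℕ} (hn : n ≠ 0) (hf0 : f ≠ 0) (hf : f ∣ n ^ 2) :
    f / Nat.gcd f n ∣ n := by
  have hg : Nat.gcd f n ∣ f := Nat.gcd_dvd_left f n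
  have hne : f / Nat.gcd f n ≠ 0 := by
    have := Nat.div_pos (Nat.le_of_dvd (Nat.pos_of_ne_zero hf0) hg)
      (Nat.gcd_pos_of_pos_left n (Nat.pos_of_ne_zero hf0))
    omega
  rw [← Nat.factorization_le_iff_dvd hne hn, Nat.factorization_div hg,
    Nat.factorization_gcd hf0 hn]
  have h2 : f.factorization ≤ (n ^ 2).factorization :=
    (Nat.factorization_le_iff_dvd hf0 (pow_ne_zero 2 hn)).2 hf
  intro p
  have h2p := h2 p
  rw [Nat.factorization_pow] at h2p
  simp only [Finsupp.coe_tsub, Pi.sub_apply, Finsupp.inf_apply, Finsupp.smul_apply,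
    smul_eq_mul] at *
  omega

lemma aux_mul_sigma_le (n : ℕ) (hn : n ≠ 0) :
    n * (σ 1 n) ≤ σ 1 (n ^ 2) := by
  rw [sigma_one_apply, sigma_one_apply]
  calc n * ∑ d ∈ n.divisors, d = ∑ d ∈ n.divisors, n * d := Finset.mul_sum _ _ _
    _ = ∑ f ∈ n.divisors.image (n * ·), f := by
        rw [Finset.sum_image]
        intro a _ b _ h
        exact Nat.eq_of_mul_eq_mul_left (Nat.pos_of_ne_zero hn) h
    _ ≤ ∑ f ∈ (n ^ 2).divisors, f := by
        apply Finset.sum_le_sum_of_subset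
        intro f hf
        simp only [Finset.mem_image, Nat.mem_divisors] at hf ⊢
        obtain ⟨d, ⟨hd, _⟩, rfl⟩ := hf
        exact ⟨by rw [pow_two]; exact mul_dvd_mul_left n hd, pow_ne_zero 2 hn⟩

lemma aux_sigma_sq_le (n : ℕ) (hn : n ≠ 0) :
    σ 1 (n ^ 2) ≤ (σ 1 n) ^ 2 := by
  rw [sigma_one_apply, sigma_one_apply]
  conv_rhs => rw [sq, Finset.sum_mul_sum, ← Finset.sum_product']
  have hinj : ∀ x ∈ (n ^ 2).divisors, ∀ y ∈ (n ^ 2).divisors,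
      (fun f => (Nat.gcd f n, f / Nat.gcd f n)) x = (fun f => (Nat.gcd f n, f / Nat.gcd f n)) y
      → x = y := by
    intro x hx y hy h
    simp only [Prod.mk.injEq] at h
    have hx' : Nat.gcd x n * (x / Nat.gcd x n) = x := Nat.mul_div_cancel' (Nat.gcd_dvd_left x n)
    have hy' : Nat.gcd y n * (y / Nat.gcd y n) = y := Nat.mul_div_cancel' (Nat.gcd_dvd_left y n)
    rw [← hx', h.2, h.1, hy']
  calc ∑ f ∈ (n ^ 2).divisors, f
      = ∑ p ∈ (n ^ 2).divisors.image (fun f => (Nat.gcd f n, f / Nat.gcd f n)), p.1 * p.2 := by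
        rw [Finset.sum_image hinj]
        refine Finset.sum_congr rfl fun f hf => ?_
        exact (Nat.mul_div_cancel' (Nat.gcd_dvd_left f n)).symm
    _ ≤ ∑ p ∈ n.divisors ×ˢ n.divisors, p.1 * p.2 := by
        apply Finset.sum_le_sum_of_subset
        intro p hp
        simp only [Finset.mem_image, Nat.mem_divisors] at hp
        obtain ⟨f, ⟨hfd, _⟩, rfl⟩ := hp
        have hf0 : f ≠ 0 := by
          rintro rfl
          exact (pow_ne_zero 2 hn) (Nat.eq_zero_of_zero_dvd hfd)
        simp only [Finset.mem_product, Nat.mem_divisors]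
        exact ⟨⟨Nat.gcd_dvd_right f n, hn⟩, ⟨aux_div_gcd_dvd hn hf0 hfd, hn⟩⟩

/-- For an odd perfect number `N = q^k * n^2` in Eulerian form,
`5/4 < √(8/5) < I(n) < 2`. -/
theorem stmt_10 (q k n : ℕ) (hq : q.Prime) (hq1 : q % 4 = 1) (hk1 : k % 4 = 1)
    (hgcd : Nat.gcd q n = 1) (hodd : Odd (q ^ k * n ^ 2))
    (hperf : Nat.Perfect (q ^ k * n ^ 2)) :
    (5 : ℝ) / 4 < Real.sqrt (8 / 5) ∧
    Real.sqrt (8 / 5) < abundancy n ∧ abundancy n < 2 := by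
  have hq2 := hq.two_le
  have hq5 : 5 ≤ q := by omega
  have hk : 1 ≤ k := by omega
  have hN : 0 < q ^ k * n ^ 2 := hperf.2
  have hn : n ≠ 0 := by rintro rfl; simp at hN
  -- sigma of the prime power
  have hA : σ 1 (q ^ k) = ∑ j ∈ Finset.range (k + 1), q ^ j := by
    rw [sigma_apply_prime_pow hq]; simp
  have hA2 : q ^ k + 1 ≤ σ 1 (q ^ k) := by
    rw [hA, Finset.sum_range_succ]
    have : 1 ≤ ∑ j ∈ Finset.range k, q ^ j := by
      calc 1 = q ^ 0 := (pow_zero q).symm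
        _ ≤ _ := Finset.single_le_sum (f := fun j => q ^ j)
            (fun i _ => Nat.zero_le _) (Finset.mem_range.2 hk)
    omega
  -- the perfect-number equation, split by multiplicativity
  have hcop : Nat.Coprime (q ^ k) (n ^ 2) := Nat.Coprime.pow _ _ hgcd
  have hσ : σ 1 (q ^ k) * σ 1 (n ^ 2) = 2 * (q ^ k * n ^ 2) := by
    rw [← isMultiplicative_sigma.map_mul_of_coprime hcop, sigma_one_apply]
    exact (Nat.perfect_iff_sum_divisors_eq_two_mul hN).1 hperf
  have hsn : n ≤ σ 1 n := by
    rw [sigma_one_apply]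
    exact Finset.single_le_sum (f := fun d => d) (fun i _ => Nat.zero_le _)
      (Nat.mem_divisors_self n hn)
  -- move to the reals
  obtain ⟨a, ha⟩ : ∃ a : ℝ, a = (σ 1 (q ^ k) : ℝ) := ⟨_, rfl⟩
  obtain ⟨b, hb⟩ : ∃ b : ℝ, b = (σ 1 (n ^ 2) : ℝ) := ⟨_, rfl⟩
  obtain ⟨s, hs⟩ : ∃ s : ℝ, s = (σ 1 n : ℝ) := ⟨_, rfl⟩
  have hnr : (0 : ℝ) < (n : ℝ) := by exact_mod_cast Nat.pos_of_ne_zero hn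
  have hQr : (0 : ℝ) < (q : ℝ) ^ k := by positivity
  have h1 : a * b = 2 * ((q : ℝ) ^ k * (n : ℝ) ^ 2) := by rw [ha, hb]; exact_mod_cast hσ
  have h2 : (q : ℝ) ^ k + 1 ≤ a := by rw [ha]; exact_mod_cast hA2
  have h3 : a * ((q : ℝ) - 1) = (q : ℝ) ^ (k + 1) - 1 := by
    have : a = ∑ j ∈ Finset.range (k + 1), (q : ℝ) ^ j := by
      rw [ha, hA]; push_cast; ring_nf
    rw [this, geom_sum_mul]
  have h4 : (n : ℝ) * s ≤ b := by rw [hs, hb]; exact_mod_cast aux_mul_sigma_le n hn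
  have h5 : b ≤ s ^ 2 := by rw [hs, hb]; exact_mod_cast aux_sigma_sq_le n hn
  have hsr : (n : ℝ) ≤ s := by rw [hs]; exact_mod_cast hsn
  have hq5r : (5 : ℝ) ≤ (q : ℝ) := by exact_mod_cast hq5
  -- key bound : 4 a < 5 q^k
  have hA54 : 4 * a < 5 * (q : ℝ) ^ k := by
    have hqk1 : (q : ℝ) ^ (k + 1) = (q : ℝ) * (q : ℝ) ^ k := by ring
    nlinarith [hQr, hq5r, h3]
  have hbpos : (0 : ℝ) < b := lt_of_lt_of_le (mul_pos hnr (lt_of_lt_of_le hnr hsr)) h4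
  have hapos : (0 : ℝ) < a := by nlinarith
  -- b < 2 n^2
  have hblt : b < 2 * (n : ℝ) ^ 2 := by nlinarith
  -- 8 n^2 < 5 b
  have hbgt : 8 * (n : ℝ) ^ 2 < 5 * b := by nlinarith
  have hab : abundancy n = s / (n : ℝ) := by rw [abundancy, hs]
  have habpos : 0 < abundancy n := by rw [hab]; exact div_pos (lt_of_lt_of_le hnr hsr) hnr
  refine ⟨?_, ?_, ?_⟩
  · rw [Real.lt_sqrt (by norm_num)]
    norm_num
  · rw [Real.sqrt_lt' habpos, hab, div_pow, lt_div_iff₀ (by positivity)]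
    linarith
  · rw [hab, div_lt_iff₀ hnr]
    have h6 : (n : ℝ) * s < (n : ℝ) * (2 * (n : ℝ)) := by
      calc (n : ℝ) * s ≤ b := h4
        _ < 2 * (n : ℝ) ^ 2 := hblt
        _ = (n : ℝ) * (2 * (n : ℝ)) := by ring
    exact lt_of_mul_lt_mul_left h6 hnr.le
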